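/- For every real number t with |t| ≤ 1, the matrix L(t)·L(t)ᵀ − (3 − 2√2)·I₄ is positive semidefinite, where L(t) is the 4×4 real matrix [[1,0,0,0],[0,1,0,0],[t,t,1,0],[t,t,0,1]]. -/

import Mathlib

open Matrix

lemma vertical_key (t a b u v r : ℝ) (hr : r * r = 2) (hr1 : 1 ≤ r) (ht2 : t ^ 2 ≤ 1) :
    0 ≤ a * ((1 - (3 - 2 * r)) * a + t * u + t * v)
      + b * ((1 - (3 - 2 * r)) * b + t * u + t * v)
      + u * (t * a + t * b + (t * t + t * t + 1 - (3 - 2 * r)) * u + (t * t + t * t) * v)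
      + v * (t * a + t * b + (t * t + t * t) * u + (t * t + t * t + 1 - (3 - 2 * r)) * v) := by
  have hc : (0:ℝ) < 3 - 2 * r := by nlinarith
  have hd : (0:ℝ) < 2 * r - 2 := by nlinarith
  nlinarith [sq_nonneg ((2 * r - 2) * a + t * (u + v)), sq_nonneg ((2 * r - 2) * b + t * (u + v)),
    mul_nonneg (mul_nonneg hc.le (sub_nonneg.mpr ht2)) (sq_nonneg (u + v)),
    mul_nonneg hc.le (sq_nonneg (u - v)), hr, hc, hd,
    mul_pos hd hd]

theorem vertical_noise_eigenvalue_bound_const (t : ℝ) (ht : |t| ≤ 1) :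
    ((!![1, 0, 0, 0;
         0, 1, 0, 0;
         t, t, 1, 0;
         t, t, 0, 1] : Matrix (Fin 4) (Fin 4) ℝ)
      * (!![1, 0, 0, 0;
            0, 1, 0, 0;
            t, t, 1, 0;
            t, t, 0, 1] : Matrix (Fin 4) (Fin 4) ℝ)ᵀ
      - (3 - 2 * Real.sqrt 2) • 1).PosSemidef := by
  have hr : Real.sqrt 2 * Real.sqrt 2 = 2 := Real.mul_self_sqrt (by norm_num)
  have hr1 : (1:ℝ) ≤ Real.sqrt 2 := by nlinarith [Real.sqrt_nonneg 2]
  have ht2 : t ^ 2 ≤ 1 := by nlinarith [abs_nonneg t, sq_abs t, abs_le.mp ht]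
  have hT : (!![1, 0, 0, 0;
         0, 1, 0, 0;
         t, t, 1, 0;
         t, t, 0, 1] : Matrix (Fin 4) (Fin 4) ℝ)ᵀ =
      !![1, 0, t, t;
         0, 1, t, t;
         0, 0, 1, 0;
         0, 0, 0, 1] := by
    ext i j
    fin_cases i <;> fin_cases j <;> rfl
  rw [hT]
  rw [Matrix.posSemidef_iff_dotProduct_mulVec]
  constructor
  · unfold Matrix.IsHermitian
    ext i j
    fin_cases i <;> fin_cases j <;>
      simp [Matrix.mul_apply, Fin.sum_univ_four, Matrix.one_apply] <;> first | rfl | ring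
  · intro x
    simp only [dotProduct, Matrix.mulVec, Fin.sum_univ_four, Matrix.sub_apply,
      Matrix.mul_apply, Matrix.smul_apply, Matrix.one_apply, Matrix.of_apply, Matrix.cons_val, star_trivial,
      smul_eq_mul]
    norm_num [Matrix.vecHead, Matrix.vecTail, Fin.ext_iff, show ((3:Fin 4) : ℕ) = 3 from rfl]
    linarith [vertical_key t (x 0) (x 1) (x 2) (x 3) (Real.sqrt 2) hr hr1 ht2]
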